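/- Let C'_1 ≤ C'_2 ≤ ... ≤ C'_n be valid underestimates of the sorted completion times of any feasible schedule (i.e., for every feasible σ, C_[i](σ) ≥ C'_i for all i). Then the optimal value of the assignment problem min ∑_{i,j} x_{i,j}·w_j·max(C'_i − d_j, 0), over doubly stochastic 0-1 matrices x, is a lower bound on the weighted total tardiness ∑_j w_j·max(C_j(σ) − d_j, 0) of every feasible schedule σ. -/

import Mathlib

open Finset

/-- Assignment lower bound for weighted total tardiness: if
`C'_1 ≤ ... ≤ C'_n` underestimate the sorted completion times of a feasible
schedule `C` (i.e. `C' i ≤` the `i`-th smallest value of `C`), then the optimal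
value of the assignment problem with costs `w j · max(C'_i - d j, 0)` (minimum
over all permutations, i.e. 0-1 doubly stochastic matrices) is a lower bound on
the weighted total tardiness `∑ j, w j · max(C j - d j, 0)`. -/
theorem stmt7 (n : ℕ) (d w C' : Fin n → ℝ)
    (hw : ∀ j, 0 ≤ w j) (hmono : Monotone C')
    (C : Fin n → ℝ)
    (hund : ∀ i : Fin n, C' i ≤ C (Tuple.sort C i)) :
    (Finset.univ.inf' Finset.univ_nonempty
        fun π : Equiv.Perm (Fin n) => ∑ j, w j * max (C' (π j) - d j) 0)
      ≤ ∑ j, w j * max (C j - d j) 0 := by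
  refine le_trans (Finset.inf'_le _ (Finset.mem_univ (Tuple.sort C)⁻¹)) ?_
  apply Finset.sum_le_sum
  intro j _
  have h := hund ((Tuple.sort C)⁻¹ j)
  rw [show (Tuple.sort C) ((Tuple.sort C)⁻¹ j) = j from (Tuple.sort C).apply_symm_apply j] at h
  exact mul_le_mul_of_nonneg_left (max_le_max (by linarith) le_rfl) (hw j)
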